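/- The Bellman backup preserves the class of pointwise minima of finitely many linear functions, with an explicitly constructed representing set: let Γ' = { γ' : I → ℝ | γ' = c a + β · ∑_{z ∈ Z} (M a z).mulVec γ_z for some a ∈ A and some family (γ_z)_{z ∈ Z} of elements of Γ }, which is a finite nonempty set. Then for every p : I → ℝ, min_{a ∈ A} ( ∑_i (c a) i · p i + β · ∑_{z ∈ Z} v_Γ( (M a z)ᵀ.mulVec p ) ) = v_{Γ'}(p). -/

import Mathlib

open Matrix

/-- The POMDP Bellman backup preserves the class of pointwise minima of finitely many
linear functions, with the explicitly constructed representing set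
`Γ' = { c a + β • ∑ z, (M a z).mulVec γ_z : a ∈ A, γ_z ∈ Γ }`, which is a finite
nonempty set of vectors. -/
theorem bellman_backup_piecewise_linear
    {I A Z : Type*} [Fintype I] [Nonempty I] [Fintype A] [Nonempty A]
    [Fintype Z] [Nonempty Z]
    (β : ℝ) (hβ0 : 0 ≤ β) (hβ1 : β < 1)
    (c : A → I → ℝ) (M : A → Z → Matrix I I ℝ)
    (hM0 : ∀ a z i j, 0 ≤ M a z i j)
    (hM1 : ∀ a i, ∑ z, ∑ j, M a z i j = 1)
    (Γ : Finset (I → ℝ)) (hΓ : Γ.Nonempty) :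
    ∃ (Γ' : Finset (I → ℝ)) (hΓ' : Γ'.Nonempty),
      (↑Γ' : Set (I → ℝ)) =
        {γ' : I → ℝ | ∃ (a : A) (g : Z → I → ℝ), (∀ z, g z ∈ Γ) ∧
          γ' = c a + β • ∑ z, (M a z).mulVec (g z)} ∧
      ∀ p : I → ℝ,
        Finset.univ.inf' Finset.univ_nonempty
          (fun a : A => ∑ i, c a i * p i +
            β * ∑ z, Γ.inf' hΓ (fun γ => ∑ i, γ i * (M a z)ᵀ.mulVec p i)) =
        Γ'.inf' hΓ' (fun γ' => ∑ i, γ' i * p i) := by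
  classical
  set F : A × (Z → Γ) → (I → ℝ) :=
    fun ag => c ag.1 + β • ∑ z, (M ag.1 z).mulVec (ag.2 z) with hF
  refine ⟨Finset.univ.image F, (Finset.univ_nonempty_iff.mpr ⟨(Classical.arbitrary A, fun _ => Classical.choice hΓ.to_subtype)⟩).image F, ?_, ?_⟩
  · ext γ'
    simp only [Finset.coe_image, Finset.coe_univ, Set.image_univ, Set.mem_range,
      Set.mem_setOf_eq, hF]
    constructor
    · rintro ⟨⟨a, g⟩, rfl⟩
      exact ⟨a, fun z => g z, fun z => (g z).2, rfl⟩
    · rintro ⟨a, g, hg, rfl⟩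
      exact ⟨⟨a, fun z => ⟨g z, hg z⟩⟩, rfl⟩
  · intro p
    haveI : Nonempty (A × (Z → Γ)) := ⟨(Classical.arbitrary A, fun _ => Classical.choice hΓ.to_subtype)⟩
    rw [Finset.inf'_image]
    -- key rewriting: dot product with transpose
    have key : ∀ (a : A) (z : Z) (γ : I → ℝ),
        ∑ i, γ i * (M a z)ᵀ.mulVec p i = ∑ i, (M a z).mulVec γ i * p i := by
      intro a z γ
      simp only [Matrix.mulVec, dotProduct, Matrix.transpose_apply,
        Finset.mul_sum, Finset.sum_mul]
      rw [Finset.sum_comm]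
      congr 1; ext i; congr 1; ext j; ring
    have hrhs : ∀ ag : A × (Z → Γ),
        ∑ i, F ag i * p i =
          (∑ i, c ag.1 i * p i) + β * ∑ z, ∑ i, (M ag.1 z).mulVec (ag.2 z) i * p i := by
      intro ⟨a, g⟩
      simp only [hF, Pi.add_apply, Pi.smul_apply, Finset.sum_apply, smul_eq_mul,
        add_mul, Finset.sum_add_distrib, Finset.mul_sum, Finset.sum_mul]
      rw [Finset.sum_comm (γ := I)]
      ring_nf
    apply le_antisymm
    · apply Finset.le_inf'
      rintro ⟨a, g⟩ _
      show _ ≤ ∑ i, F (a, g) i * p i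
      rw [hrhs (a, g)]
      refine le_trans (Finset.inf'_le (fun a : A => ∑ i, c a i * p i +
        β * ∑ z, Γ.inf' hΓ (fun γ => ∑ i, γ i * (M a z)ᵀ.mulVec p i))
        (Finset.mem_univ a)) ?_
      refine add_le_add_right (mul_le_mul_of_nonneg_left
        (Finset.sum_le_sum fun z _ => ?_) hβ0) _
      rw [← key]
      exact Finset.inf'_le _ (g z).2
    · apply Finset.le_inf'
      intro a _
      -- choose minimizers
      have : ∀ z : Z, ∃ g : Γ, (fun γ => ∑ i, (M a z).mulVec γ i * p i) g =
          Γ.inf' hΓ (fun γ => ∑ i, γ i * (M a z)ᵀ.mulVec p i) := by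
        intro z
        obtain ⟨γ, hγ, hmin⟩ := Finset.exists_mem_eq_inf' hΓ
          (fun γ => ∑ i, γ i * (M a z)ᵀ.mulVec p i)
        refine ⟨⟨γ, hγ⟩, ?_⟩
        show ∑ i, (M a z).mulVec γ i * p i = _
        rw [← key]; exact hmin.symm
      choose g hg using this
      calc (Finset.univ : Finset (A × (Z → Γ))).inf' Finset.univ_nonempty
            (fun ag => ∑ i, F ag i * p i) ≤ ∑ i, F (a, g) i * p i :=
            Finset.inf'_le _ (Finset.mem_univ (a, g))
        _ = _ := by
            rw [hrhs (a, g)]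
            congr 1
            congr 1
            exact Finset.sum_congr rfl fun z _ => hg z
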